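/- Let D be a bounded domain in ℝⁿ and let h₁, h₂ : ℝⁿ → ℝ be L-Lipschitz functions with h₂ ≤ h₁ on D and h₁ = h₂ = 0 on ℝⁿ∖D. Define H on ℝ^{n+1}∖cl(D×{0}) by H(x,z) = (x, z + h₁(x)) if x ∈ cl(D) and z > 0, H(x,z) = (x, z + h₂(x)) if x ∈ cl(D) and z < 0, and H(x,z) = (x,z) if x ∉ cl(D). Then H is a homeomorphism from the slit domain ℝ^{n+1}∖(cl(D)×{0}) onto ℝ^{n+1}∖{(x,z) : x ∈ cl(D), h₂(x) ≤ z ≤ h₁(x)}, and H is (L+2)-bi-Lipschitz on each of the two open half-spaces {(x,z) : z > 0} and {(x,z) : z < 0}; in particular H is locally (L+2)-bi-Lipschitz. -/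

import Mathlib

open Metric Set

noncomputable section

/-- Euclidean n-space. -/
abbrev En (n : ℕ) : Type := EuclideanSpace ℝ (Fin n)
/-- ℝ^{n+1}, realized as the L²-product ℝⁿ × ℝ (so that the metric is Euclidean). -/
abbrev Pn (n : ℕ) : Type := WithLp 2 (En n × ℝ)

def mkP {n : ℕ} (x : En n) (z : ℝ) : Pn n := (WithLp.equiv 2 (En n × ℝ)).symm (x, z)
def fstP {n : ℕ} (p : Pn n) : En n := ((WithLp.equiv 2 (En n × ℝ)) p).1
def sndP {n : ℕ} (p : Pn n) : ℝ := ((WithLp.equiv 2 (En n × ℝ)) p).2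

open Classical in
/-- The unfolding map H of Lemma 4.4. -/
def Hmap {n : ℕ} (D : Set (En n)) (h₁ h₂ : En n → ℝ) (p : Pn n) : Pn n :=
  if fstP p ∈ closure D then
    (if 0 < sndP p then mkP (fstP p) (sndP p + h₁ (fstP p))
     else if sndP p < 0 then mkP (fstP p) (sndP p + h₂ (fstP p))
     else p)
  else p

section Aux

variable {n : ℕ}

lemma fstP_mkP (x : En n) (z : ℝ) : fstP (mkP x z) = x := rfl
lemma sndP_mkP (x : En n) (z : ℝ) : sndP (mkP x z) = z := rfl
lemma mkP_eta (p : Pn n) : mkP (fstP p) (sndP p) = p := rfl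
lemma mkP_add (x x' : En n) (z z' : ℝ) : mkP x z + mkP x' z' = mkP (x + x') (z + z') := rfl
lemma mkP_sub (x x' : En n) (z z' : ℝ) : mkP x z - mkP x' z' = mkP (x - x') (z - z') := rfl
lemma norm_mkP_snd (z : ℝ) : ‖mkP (0 : En n) z‖ = |z| := by
  rw [show (|z| : ℝ) = ‖z‖ from rfl, mkP]
  exact WithLp.norm_toLp_snd 2 (En n) ℝ z

lemma dist_fstP_le (p q : Pn n) : dist (fstP p) (fstP q) ≤ dist p q := by
  rw [WithLp.prod_dist_eq_of_L2]
  exact Real.le_sqrt_of_sq_le (le_add_of_nonneg_right (by positivity))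

lemma dist_sndP_le (p q : Pn n) : dist (sndP p) (sndP q) ≤ dist p q := by
  rw [WithLp.prod_dist_eq_of_L2]
  exact Real.le_sqrt_of_sq_le (le_add_of_nonneg_left (by positivity))

lemma dist_shift (x x' : En n) (z z' a a' : ℝ) :
    dist (mkP x (z + a)) (mkP x' (z' + a')) ≤ dist (mkP x z) (mkP x' z') + dist a a' := by
  rw [dist_eq_norm, dist_eq_norm, Real.dist_eq, mkP_sub, mkP_sub]
  have h : mkP (x - x') (z + a - (z' + a')) = mkP (x - x') (z - z') + mkP 0 (a - a') := by
    rw [mkP_add]; congr 1 <;> [skip; ring]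
    · rw [add_zero]
  rw [h]
  calc ‖mkP (x - x') (z - z') + mkP (0:En n) (a - a')‖
      ≤ ‖mkP (x - x') (z - z')‖ + ‖mkP (0:En n) (a - a')‖ := norm_add_le _ _
    _ = ‖mkP (x - x') (z - z')‖ + |a - a'| := by rw [norm_mkP_snd]

lemma continuous_fstP : Continuous (fstP (n := n)) :=
  continuous_fst.comp (WithLp.prod_continuous_ofLp _ _ _)
lemma continuous_sndP : Continuous (sndP (n := n)) :=
  continuous_snd.comp (WithLp.prod_continuous_ofLp _ _ _)

lemma continuous_mkP {α : Type*} [TopologicalSpace α] {f : α → En n} {g : α → ℝ}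
    (hf : Continuous f) (hg : Continuous g) : Continuous fun a => mkP (f a) (g a) :=
  (WithLp.prod_continuous_toLp _ _ _).comp (hf.prodMk hg)

/-- Upper Lipschitz bound for the vertical shear by an `L`-Lipschitz function. -/
lemma shear_upper {L : ℝ} (hL : 0 ≤ L) {h : En n → ℝ}
    (hlip : LipschitzWith (Real.toNNReal L) h) (p q : Pn n) :
    dist (mkP (fstP p) (sndP p + h (fstP p))) (mkP (fstP q) (sndP q + h (fstP q)))
      ≤ (L + 1) * dist p q := by
  have h1 : dist (h (fstP p)) (h (fstP q)) ≤ L * dist (fstP p) (fstP q) := by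
    have := hlip.dist_le_mul (fstP p) (fstP q)
    rwa [Real.coe_toNNReal L hL] at this
  have h2 := dist_fstP_le p q
  calc dist (mkP (fstP p) (sndP p + h (fstP p))) (mkP (fstP q) (sndP q + h (fstP q)))
      ≤ dist (mkP (fstP p) (sndP p)) (mkP (fstP q) (sndP q))
          + dist (h (fstP p)) (h (fstP q)) := dist_shift _ _ _ _ _ _
    _ = dist p q + dist (h (fstP p)) (h (fstP q)) := by rw [mkP_eta, mkP_eta]
    _ ≤ dist p q + L * dist (fstP p) (fstP q) := by linarith
    _ ≤ dist p q + L * dist p q := by nlinarith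
    _ = (L + 1) * dist p q := by ring

/-- Lower Lipschitz bound for the vertical shear. -/
lemma shear_lower {L : ℝ} (hL : 0 ≤ L) {h : En n → ℝ}
    (hlip : LipschitzWith (Real.toNNReal L) h) (p q : Pn n) :
    dist p q ≤ (L + 1) *
      dist (mkP (fstP p) (sndP p + h (fstP p))) (mkP (fstP q) (sndP q + h (fstP q))) := by
  set P := mkP (fstP p) (sndP p + h (fstP p)) with hP
  set Q := mkP (fstP q) (sndP q + h (fstP q)) with hQ
  have h1 : dist (h (fstP p)) (h (fstP q)) ≤ L * dist (fstP p) (fstP q) := by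
    have := hlip.dist_le_mul (fstP p) (fstP q)
    rwa [Real.coe_toNNReal L hL] at this
  have h2 : dist (fstP p) (fstP q) ≤ dist P Q := by
    have := dist_fstP_le P Q
    rwa [hP, hQ, fstP_mkP, fstP_mkP] at this
  have h3 : dist p q ≤ dist P Q + dist (h (fstP p)) (h (fstP q)) := by
    have := dist_shift (fstP p) (fstP q) (sndP p + h (fstP p)) (sndP q + h (fstP q))
      (-(h (fstP p))) (-(h (fstP q)))
    rw [show sndP p + h (fstP p) + -(h (fstP p)) = sndP p by ring,
        show sndP q + h (fstP q) + -(h (fstP q)) = sndP q by ring,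
        mkP_eta, mkP_eta, dist_neg_neg] at this
    exact this
  nlinarith

/-- Combined (L+2)-bi-Lipschitz bounds for the shear. -/
lemma shear_biLip {L : ℝ} (hL : 0 ≤ L) {h : En n → ℝ}
    (hlip : LipschitzWith (Real.toNNReal L) h) (p q : Pn n) :
    (L + 2)⁻¹ * dist p q ≤
        dist (mkP (fstP p) (sndP p + h (fstP p))) (mkP (fstP q) (sndP q + h (fstP q))) ∧
      dist (mkP (fstP p) (sndP p + h (fstP p))) (mkP (fstP q) (sndP q + h (fstP q)))
        ≤ (L + 2) * dist p q := by
  have hpos : (0:ℝ) < L + 2 := by linarith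
  have hu := shear_upper hL hlip p q
  have hl := shear_lower hL hlip p q
  constructor
  · rw [inv_mul_le_iff₀ hpos]
    nlinarith [dist_nonneg (x := mkP (fstP p) (sndP p + h (fstP p)))
      (y := mkP (fstP q) (sndP q + h (fstP q)))]
  · nlinarith [dist_nonneg (x := p) (y := q)]

lemma Hmap_id {D : Set (En n)} {h₁ h₂ : En n → ℝ} {p : Pn n}
    (hx : fstP p ∉ closure D) : Hmap D h₁ h₂ p = p := by
  unfold Hmap; rw [if_neg hx]

lemma Hmap_eq {D : Set (En n)} {h₁ h₂ : En n → ℝ}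
    (hz1 : ∀ x ∉ D, h₁ x = 0) (hz2 : ∀ x ∉ D, h₂ x = 0) (p : Pn n) :
    Hmap D h₁ h₂ p =
      if 0 < sndP p then mkP (fstP p) (sndP p + h₁ (fstP p))
      else if sndP p < 0 then mkP (fstP p) (sndP p + h₂ (fstP p))
      else p := by
  unfold Hmap
  by_cases hx : fstP p ∈ closure D
  · rw [if_pos hx]
  · rw [if_neg hx]
    have hx' : fstP p ∉ D := fun h => hx (subset_closure h)
    rw [hz1 _ hx', hz2 _ hx']
    split_ifs with h1 h2
    · rw [add_zero, mkP_eta]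
    · rw [add_zero, mkP_eta]
    · rfl

open Classical in
/-- The inverse of the unfolding map. -/
def Ginv {n : ℕ} (h₁ h₂ : En n → ℝ) (p : Pn n) : Pn n :=
  if h₁ (fstP p) < sndP p then mkP (fstP p) (sndP p - h₁ (fstP p))
  else if sndP p < h₂ (fstP p) then mkP (fstP p) (sndP p - h₂ (fstP p))
  else p

lemma Ginv_id {h₁ h₂ : En n → ℝ} {p : Pn n} (e1 : h₁ (fstP p) = 0) (e2 : h₂ (fstP p) = 0) :
    Ginv h₁ h₂ p = p := by
  unfold Ginv
  rw [e1, e2]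
  split_ifs with hc1 hc2
  · rw [sub_zero, mkP_eta]
  · rw [sub_zero, mkP_eta]
  · rfl

end Aux

/-- Lemma 4.4: H is a homeomorphism from the slit domain ℝ^{n+1}∖(cl(D)×{0}) onto the
complement of the region between the graphs of h₂ and h₁ over cl(D), and H is
(L+2)-bi-Lipschitz on each open half-space; in particular H is locally
(L+2)-bi-Lipschitz. -/
theorem stmt13 {n : ℕ} (D : Set (En n)) (hD : IsOpen D) (hDc : IsConnected D)
    (hDb : Bornology.IsBounded D) (L : ℝ) (hL : 0 ≤ L) (h₁ h₂ : En n → ℝ)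
    (hlip1 : LipschitzWith (Real.toNNReal L) h₁)
    (hlip2 : LipschitzWith (Real.toNNReal L) h₂)
    (hle : ∀ x ∈ D, h₂ x ≤ h₁ x)
    (hz1 : ∀ x ∉ D, h₁ x = 0) (hz2 : ∀ x ∉ D, h₂ x = 0) :
    -- the slit domain, the target domain, and the two open half-spaces
    (Set.BijOn (Hmap D h₁ h₂)
        {p : Pn n | ¬ (fstP p ∈ closure D ∧ sndP p = 0)}
        {p : Pn n | ¬ (fstP p ∈ closure D ∧ h₂ (fstP p) ≤ sndP p ∧ sndP p ≤ h₁ (fstP p))}) ∧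
    ContinuousOn (Hmap D h₁ h₂) {p : Pn n | ¬ (fstP p ∈ closure D ∧ sndP p = 0)} ∧
    (∃ Hinv : Pn n → Pn n,
      ContinuousOn Hinv
        {p : Pn n | ¬ (fstP p ∈ closure D ∧ h₂ (fstP p) ≤ sndP p ∧ sndP p ≤ h₁ (fstP p))} ∧
      ∀ p ∈ {p : Pn n | ¬ (fstP p ∈ closure D ∧ sndP p = 0)}, Hinv (Hmap D h₁ h₂ p) = p) ∧
    (∀ p ∈ {q : Pn n | 0 < sndP q}, ∀ q ∈ {q : Pn n | 0 < sndP q},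
      (L + 2)⁻¹ * dist p q ≤ dist (Hmap D h₁ h₂ p) (Hmap D h₁ h₂ q) ∧
        dist (Hmap D h₁ h₂ p) (Hmap D h₁ h₂ q) ≤ (L + 2) * dist p q) ∧
    (∀ p ∈ {q : Pn n | sndP q < 0}, ∀ q ∈ {q : Pn n | sndP q < 0},
      (L + 2)⁻¹ * dist p q ≤ dist (Hmap D h₁ h₂ p) (Hmap D h₁ h₂ q) ∧
        dist (Hmap D h₁ h₂ p) (Hmap D h₁ h₂ q) ≤ (L + 2) * dist p q) ∧
    (∀ p ∈ {p : Pn n | ¬ (fstP p ∈ closure D ∧ sndP p = 0)}, ∃ s > (0:ℝ),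
      ∀ q ∈ ball p s ∩ {p : Pn n | ¬ (fstP p ∈ closure D ∧ sndP p = 0)},
        ∀ q' ∈ ball p s ∩ {p : Pn n | ¬ (fstP p ∈ closure D ∧ sndP p = 0)},
          (L + 2)⁻¹ * dist q q' ≤ dist (Hmap D h₁ h₂ q) (Hmap D h₁ h₂ q') ∧
            dist (Hmap D h₁ h₂ q) (Hmap D h₁ h₂ q') ≤ (L + 2) * dist q q') := by
  have h21 : ∀ x, h₂ x ≤ h₁ x := by
    intro x
    by_cases hx : x ∈ D
    · exact hle x hx
    · rw [hz1 x hx, hz2 x hx]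
  have hzero : ∀ x : En n, x ∉ closure D → h₁ x = 0 ∧ h₂ x = 0 := fun x hx =>
    ⟨hz1 x (fun h => hx (subset_closure h)), hz2 x (fun h => hx (subset_closure h))⟩
  have hEq := Hmap_eq (D := D) hz1 hz2
  have hpos : (0:ℝ) < L + 2 := by linarith
  -- left inverse
  have hLinv : ∀ p, ¬ (fstP p ∈ closure D ∧ sndP p = 0) →
      Ginv h₁ h₂ (Hmap D h₁ h₂ p) = p := by
    intro p hp
    rw [hEq p]
    rcases lt_trichotomy (sndP p) 0 with hz | hz | hz
    · rw [if_neg (by linarith), if_pos hz]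
      unfold Ginv
      rw [fstP_mkP, sndP_mkP]
      rw [if_neg (by nlinarith [h21 (fstP p)]), if_pos (by linarith)]
      rw [show sndP p + h₂ (fstP p) - h₂ (fstP p) = sndP p by ring, mkP_eta]
    · have hx : fstP p ∉ closure D := fun h => hp ⟨h, hz⟩
      rw [if_neg (by linarith), if_neg (by linarith)]
      exact Ginv_id (hzero _ hx).1 (hzero _ hx).2
    · rw [if_pos hz]
      unfold Ginv
      rw [fstP_mkP, sndP_mkP, if_pos (by linarith)]
      rw [show sndP p + h₁ (fstP p) - h₁ (fstP p) = sndP p by ring, mkP_eta]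
  -- right inverse on the target
  have hRinv : ∀ q, ¬ (fstP q ∈ closure D ∧ h₂ (fstP q) ≤ sndP q ∧ sndP q ≤ h₁ (fstP q)) →
      ¬ (fstP (Ginv h₁ h₂ q) ∈ closure D ∧ sndP (Ginv h₁ h₂ q) = 0) ∧
      Hmap D h₁ h₂ (Ginv h₁ h₂ q) = q := by
    intro q hq
    by_cases c1 : h₁ (fstP q) < sndP q
    · have hG : Ginv h₁ h₂ q = mkP (fstP q) (sndP q - h₁ (fstP q)) := by
        unfold Ginv; rw [if_pos c1]
      rw [hG]
      constructor
      · rintro ⟨-, h0⟩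
        rw [sndP_mkP] at h0; linarith
      · rw [hEq, fstP_mkP, sndP_mkP, if_pos (by linarith)]
        rw [show sndP q - h₁ (fstP q) + h₁ (fstP q) = sndP q by ring, mkP_eta]
    · by_cases c2 : sndP q < h₂ (fstP q)
      · have hG : Ginv h₁ h₂ q = mkP (fstP q) (sndP q - h₂ (fstP q)) := by
          unfold Ginv; rw [if_neg c1, if_pos c2]
        rw [hG]
        constructor
        · rintro ⟨-, h0⟩
          rw [sndP_mkP] at h0; linarith
        · rw [hEq, fstP_mkP, sndP_mkP, if_neg (by linarith), if_pos (by linarith)]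
          rw [show sndP q - h₂ (fstP q) + h₂ (fstP q) = sndP q by ring, mkP_eta]
      · have hx : fstP q ∉ closure D := fun h => hq ⟨h, le_of_not_gt c2, le_of_not_gt c1⟩
        rw [Ginv_id (hzero _ hx).1 (hzero _ hx).2]
        exact ⟨fun h => hx h.1, Hmap_id hx⟩
  -- half-space bi-Lipschitz bounds
  have hHS1 : ∀ p ∈ {q : Pn n | 0 < sndP q}, ∀ q ∈ {q : Pn n | 0 < sndP q},
      (L + 2)⁻¹ * dist p q ≤ dist (Hmap D h₁ h₂ p) (Hmap D h₁ h₂ q) ∧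
        dist (Hmap D h₁ h₂ p) (Hmap D h₁ h₂ q) ≤ (L + 2) * dist p q := by
    intro p hp q hq
    simp only [mem_setOf_eq] at hp hq
    rw [hEq p, hEq q, if_pos hp, if_pos hq]
    exact shear_biLip hL hlip1 p q
  have hHS2 : ∀ p ∈ {q : Pn n | sndP q < 0}, ∀ q ∈ {q : Pn n | sndP q < 0},
      (L + 2)⁻¹ * dist p q ≤ dist (Hmap D h₁ h₂ p) (Hmap D h₁ h₂ q) ∧
        dist (Hmap D h₁ h₂ p) (Hmap D h₁ h₂ q) ≤ (L + 2) * dist p q := by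
    intro p hp q hq
    simp only [mem_setOf_eq] at hp hq
    rw [hEq p, hEq q, if_neg (show ¬ (0 < sndP p) by linarith),
      if_neg (show ¬ (0 < sndP q) by linarith), if_pos hp, if_pos hq]
    exact shear_biLip hL hlip2 p q
  refine ⟨⟨?_, ?_, ?_⟩, ?_, ⟨Ginv h₁ h₂, ?_, fun p hp => hLinv p hp⟩, hHS1, hHS2, ?_⟩
  -- MapsTo
  · intro p hp
    simp only [mem_setOf_eq] at hp ⊢
    rcases lt_trichotomy (sndP p) 0 with hz | hz | hz
    · rw [hEq p, if_neg (by linarith), if_pos hz]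
      rintro ⟨-, hb, -⟩
      rw [fstP_mkP, sndP_mkP] at hb
      linarith
    · have hx : fstP p ∉ closure D := fun h => hp ⟨h, hz⟩
      rw [Hmap_id hx]
      exact fun h => hx h.1
    · rw [hEq p, if_pos hz]
      rintro ⟨-, -, hb⟩
      rw [fstP_mkP, sndP_mkP] at hb
      linarith
  -- InjOn
  · intro p hp q hq h
    rw [← hLinv p hp, ← hLinv q hq, h]
  -- SurjOn
  · intro q hq
    exact ⟨Ginv h₁ h₂ q, (hRinv q hq).1, (hRinv q hq).2⟩
  -- continuity of Hmap
  · intro p hp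
    apply ContinuousAt.continuousWithinAt
    rcases lt_trichotomy (sndP p) 0 with hz | hz | hz
    · have hU : IsOpen {q : Pn n | sndP q < 0} := isOpen_lt continuous_sndP continuous_const
      have heq : (fun q : Pn n => mkP (fstP q) (sndP q + h₂ (fstP q))) =ᶠ[nhds p]
          Hmap D h₁ h₂ := by
        refine Filter.eventuallyEq_of_mem (hU.mem_nhds hz) (fun q hq => ?_)
        simp only [mem_setOf_eq] at hq
        rw [hEq q, if_neg (by linarith), if_pos hq]
      exact ((continuous_mkP continuous_fstP
        (continuous_sndP.add (hlip2.continuous.comp continuous_fstP))).continuousAt).congr heq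
    · have hx : fstP p ∉ closure D := fun h => hp ⟨h, hz⟩
      have hV : IsOpen {q : Pn n | fstP q ∉ closure D} :=
        isClosed_closure.isOpen_compl.preimage continuous_fstP
      have heq : (fun q : Pn n => q) =ᶠ[nhds p] Hmap D h₁ h₂ :=
        Filter.eventuallyEq_of_mem (hV.mem_nhds hx) (fun q hq => (Hmap_id hq).symm)
      exact continuous_id.continuousAt.congr heq
    · have hU : IsOpen {q : Pn n | 0 < sndP q} := isOpen_lt continuous_const continuous_sndP
      have heq : (fun q : Pn n => mkP (fstP q) (sndP q + h₁ (fstP q))) =ᶠ[nhds p]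
          Hmap D h₁ h₂ := by
        refine Filter.eventuallyEq_of_mem (hU.mem_nhds hz) (fun q hq => ?_)
        simp only [mem_setOf_eq] at hq
        rw [hEq q, if_pos hq]
      exact ((continuous_mkP continuous_fstP
        (continuous_sndP.add (hlip1.continuous.comp continuous_fstP))).continuousAt).congr heq
  -- continuity of Ginv
  · intro q hq
    apply ContinuousAt.continuousWithinAt
    by_cases c1 : h₁ (fstP q) < sndP q
    · have hU : IsOpen {r : Pn n | h₁ (fstP r) < sndP r} :=
        isOpen_lt (hlip1.continuous.comp continuous_fstP) continuous_sndP
      have heq : (fun r : Pn n => mkP (fstP r) (sndP r - h₁ (fstP r))) =ᶠ[nhds q]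
          Ginv h₁ h₂ := by
        refine Filter.eventuallyEq_of_mem (hU.mem_nhds c1) (fun r hr => ?_)
        simp only [mem_setOf_eq] at hr
        unfold Ginv; rw [if_pos hr]
      exact ((continuous_mkP continuous_fstP
        (continuous_sndP.sub (hlip1.continuous.comp continuous_fstP))).continuousAt).congr heq
    · by_cases c2 : sndP q < h₂ (fstP q)
      · have hU : IsOpen {r : Pn n | sndP r < h₂ (fstP r)} :=
          isOpen_lt continuous_sndP (hlip2.continuous.comp continuous_fstP)
        have heq : (fun r : Pn n => mkP (fstP r) (sndP r - h₂ (fstP r))) =ᶠ[nhds q]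
            Ginv h₁ h₂ := by
          refine Filter.eventuallyEq_of_mem (hU.mem_nhds c2) (fun r hr => ?_)
          simp only [mem_setOf_eq] at hr
          unfold Ginv
          rw [if_neg (by nlinarith [h21 (fstP r)]), if_pos hr]
        exact ((continuous_mkP continuous_fstP
          (continuous_sndP.sub (hlip2.continuous.comp continuous_fstP))).continuousAt).congr heq
      · have hx : fstP q ∉ closure D := fun h => hq ⟨h, le_of_not_gt c2, le_of_not_gt c1⟩
        have hV : IsOpen {r : Pn n | fstP r ∉ closure D} :=
          isClosed_closure.isOpen_compl.preimage continuous_fstP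
        have heq : (fun r : Pn n => r) =ᶠ[nhds q] Ginv h₁ h₂ :=
          Filter.eventuallyEq_of_mem (hV.mem_nhds hx)
            (fun r hr => (Ginv_id (hzero _ hr).1 (hzero _ hr).2).symm)
        exact continuous_id.continuousAt.congr heq
  -- locally bi-Lipschitz
  · intro p hp
    rcases lt_trichotomy (sndP p) 0 with hz | hz | hz
    · refine ⟨-sndP p, by linarith, fun q hq q' hq' => ?_⟩
      have hmem : ∀ r ∈ ball p (-sndP p), sndP r < 0 := by
        intro r hr
        have h1 : dist (sndP r) (sndP p) ≤ dist r p := dist_sndP_le r p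
        have h2 : dist r p < -sndP p := mem_ball.mp hr
        rw [Real.dist_eq] at h1
        rcases abs_lt.mp (lt_of_le_of_lt h1 h2) with ⟨ha, hb⟩
        linarith
      exact hHS2 q (hmem q hq.1) q' (hmem q' hq'.1)
    · have hx : fstP p ∉ closure D := fun h => hp ⟨h, hz⟩
      obtain ⟨s, hs, hball⟩ := Metric.isOpen_iff.mp isClosed_closure.isOpen_compl _ hx
      refine ⟨s, hs, fun q hq q' hq' => ?_⟩
      have hid : ∀ r ∈ ball p s, Hmap D h₁ h₂ r = r := by
        intro r hr
        refine Hmap_id (hball ?_)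
        exact mem_ball.mpr (lt_of_le_of_lt (dist_fstP_le r p) (mem_ball.mp hr))
      rw [hid q hq.1, hid q' hq'.1]
      have hinv1 : (L + 2)⁻¹ ≤ 1 := inv_le_one_of_one_le₀ (by linarith)
      have hd : (0:ℝ) ≤ dist q q' := dist_nonneg
      constructor
      · nlinarith
      · nlinarith
    · refine ⟨sndP p, hz, fun q hq q' hq' => ?_⟩
      have hmem : ∀ r ∈ ball p (sndP p), 0 < sndP r := by
        intro r hr
        have h1 : dist (sndP r) (sndP p) ≤ dist r p := dist_sndP_le r p
        have h2 : dist r p < sndP p := mem_ball.mp hr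
        rw [Real.dist_eq] at h1
        rcases abs_lt.mp (lt_of_le_of_lt h1 h2) with ⟨ha, hb⟩
        linarith
      exact hHS1 q (hmem q hq.1) q' (hmem q' hq'.1)
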